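/- arXiv:1704.06048 — 2 statements merged into one kernel-verified Lean document; each statement's English description precedes it below -/
import Mathlib

section
/- Fix n ≥ 4 and s ∈ (n/2+1, n). Suppose F : [0,1] → ℝ is C¹ and satisfies F' + (n-s)F² + ((2s-n-1)r/ρ₀ + n/r)F + (2s-n-1)/ρ₀ = 0 on (0,1), where ρ₀ = ρ₀(r) = (1-r²)/2, with F(0) = 0. Then F(r) ≤ 0 for all r ∈ [0,1]. -/
open Real Set

theorem ode_F_nonpos (n : ℕ) (hn : 4 ≤ n) (s : ℝ)
    (hs : s ∈ Set.Ioo ((n : ℝ) / 2 + 1) (n : ℝ))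
    (F : ℝ → ℝ)
    (hF : ContDiffOn ℝ 1 F (Set.Icc (0 : ℝ) 1))
    (hODE : ∀ r ∈ Set.Ioo (0 : ℝ) 1,
      deriv F r + ((n : ℝ) - s) * (F r) ^ 2 +
        ((2 * s - (n : ℝ) - 1) * r / ((1 - r ^ 2) / 2) + (n : ℝ) / r) * F r +
        (2 * s - (n : ℝ) - 1) / ((1 - r ^ 2) / 2) = 0)
    (hF0 : F 0 = 0) :
    ∀ r ∈ Set.Icc (0 : ℝ) 1, F r ≤ 0 := by
  obtain ⟨hs1, hs2⟩ := hs
  have hn4 : (4:ℝ) ≤ (n:ℝ) := by exact_mod_cast hn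
  have hc : 0 < 2*s - (n:ℝ) - 1 := by linarith
  have hns : 0 < (n:ℝ) - s := by linarith
  have hFc : ContinuousOn F (Icc 0 1) := hF.continuousOn
  have hFdiff : DifferentiableOn ℝ F (Icc 0 1) := hF.differentiableOn one_ne_zero
  set p : ℝ := (n:ℝ) + 1 - 2*s with hp
  set G : ℝ → ℝ := fun r => r ^ n * ((1 - r^2)/2) ^ p * F r with hG
  have main : ∀ x ∈ Ioo (0:ℝ) 1, F x < 0 := by
    intro x₀ hx₀
    have hρ₀ : (0:ℝ) < (1 - x₀^2)/2 := by nlinarith [hx₀.1, hx₀.2]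
    have hGx₀ : G x₀ < 0 := by
      have hanti : StrictAntiOn G (Icc 0 x₀) := by
        apply strictAntiOn_of_deriv_neg (convex_Icc _ _)
        · apply ContinuousOn.mul
          · apply ContinuousOn.mul
            · exact (continuous_pow n).continuousOn
            · apply ContinuousOn.rpow_const
              · exact ((continuous_const.sub (continuous_pow 2)).div_const 2).continuousOn
              · intro x hx
                left
                have h1 : x ≤ x₀ := hx.2
                have h2 : (0:ℝ) ≤ x := hx.1
                have : (0:ℝ) < (1 - x^2)/2 := by nlinarith [hx₀.2]
                exact ne_of_gt this
          · exact hFc.mono (Icc_subset_Icc le_rfl hx₀.2.le)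
        · rw [interior_Icc]
          intro x hx
          have hx1 : x ∈ Ioo (0:ℝ) 1 := ⟨hx.1, hx.2.trans hx₀.2⟩
          have hxpos : 0 < x := hx1.1
          have hxne : x ≠ 0 := hxpos.ne'
          have hρ : (0:ℝ) < (1 - x^2)/2 := by nlinarith [hx1.2]
          have hρne : ((1 - x^2)/2 : ℝ) ≠ 0 := ne_of_gt hρ
          have hFd : HasDerivAt F (deriv F x) x :=
            ((hFdiff x (Ioo_subset_Icc_self hx1)).differentiableAt
              (Icc_mem_nhds hx1.1 hx1.2)).hasDerivAt
          have h1 : HasDerivAt (fun r : ℝ => r ^ n) ((n:ℝ) * x ^ (n-1)) x := hasDerivAt_pow n x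
          have hb : HasDerivAt (fun r : ℝ => (1 - r^2)/2) (-x) x := by
            have h := ((hasDerivAt_pow 2 x).const_sub 1).div_const 2
            refine h.congr_deriv ?_
            push_cast
            ring
          have h2 : HasDerivAt (fun r : ℝ => ((1 - r^2)/2) ^ p)
              (-x * p * ((1 - x^2)/2) ^ (p-1)) x := hb.rpow_const (Or.inl hρne)
          have hGd : HasDerivAt G
              (((n:ℝ) * x ^ (n-1) * ((1 - x^2)/2) ^ p
                + x ^ n * (-x * p * ((1 - x^2)/2) ^ (p-1))) * F x
               + x ^ n * ((1 - x^2)/2) ^ p * deriv F x) x := (h1.mul h2).mul hFd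
          rw [hGd.deriv]
          have hode := hODE x hx1
          have hderivF : deriv F x = -(((n:ℝ) - s) * (F x)^2)
              - ((2*s - (n:ℝ) - 1) * x / ((1 - x^2)/2) + (n:ℝ)/x) * F x
              - (2*s - (n:ℝ) - 1)/((1 - x^2)/2) := by linarith
          rw [hderivF]
          have hpow : x ^ n = x ^ (n-1) * x := by
            conv_lhs => rw [← Nat.sub_add_cancel (by omega : 1 ≤ n)]
            rw [pow_succ]
          have hrpow : ((1 - x^2)/2) ^ p = ((1 - x^2)/2) ^ (p-1) * ((1 - x^2)/2) := by
            rw [← Real.rpow_add_one hρne]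
            ring_nf
          have key : (((n:ℝ) * x ^ (n-1) * ((1 - x^2)/2) ^ p
                + x ^ n * (-x * p * ((1 - x^2)/2) ^ (p-1))) * F x
               + x ^ n * ((1 - x^2)/2) ^ p *
                 (-(((n:ℝ) - s) * (F x)^2)
                   - ((2*s - (n:ℝ) - 1) * x / ((1 - x^2)/2) + (n:ℝ)/x) * F x
                   - (2*s - (n:ℝ) - 1)/((1 - x^2)/2)))
              = x ^ n * ((1 - x^2)/2) ^ p *
                (-(((n:ℝ) - s) * (F x)^2) - (2*s - (n:ℝ) - 1)/((1 - x^2)/2)) := by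
            have h2ne : (1:ℝ) - x^2 ≠ 0 := by nlinarith [hx1.2]
            rw [hpow, hrpow]
            linear_combination
              (-(2*s - (n:ℝ) - 1) * ((1 - x^2)/2)^(p-1) * F x * x^(n-1) * x^2) *
                mul_inv_cancel₀ hρne +
              (-(n:ℝ) * ((1 - x^2)/2)^(p-1) * ((1 - x^2)/2) * F x * x^(n-1)) *
                mul_inv_cancel₀ hxne +
              (-(x^(n-1) * x^2 * ((1 - x^2)/2)^(p-1) * F x)) * hp
          rw [key]
          have hposμ : 0 < x ^ n * ((1 - x^2)/2) ^ p :=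
            mul_pos (pow_pos hxpos n) (Real.rpow_pos_of_pos hρ p)
          have hneg : (-(((n:ℝ) - s) * (F x)^2) - (2*s - (n:ℝ) - 1)/((1 - x^2)/2)) < 0 := by
            have ha : 0 ≤ ((n:ℝ) - s) * (F x)^2 := mul_nonneg hns.le (sq_nonneg _)
            have hb2 : 0 < (2*s - (n:ℝ) - 1)/((1 - x^2)/2) := div_pos hc hρ
            linarith
          exact mul_neg_of_pos_of_neg hposμ hneg
      have hlt := hanti (left_mem_Icc.mpr hx₀.1.le) (right_mem_Icc.mpr hx₀.1.le) hx₀.1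
      have hG0 : G 0 = 0 := by
        simp [hG, hF0, zero_pow (by omega : n ≠ 0)]
      linarith
    by_contra h
    push_neg at h
    have : 0 ≤ G x₀ := by
      apply mul_nonneg
      · exact mul_nonneg (pow_nonneg hx₀.1.le n) (Real.rpow_nonneg hρ₀.le p)
      · exact h
    linarith
  intro r hr
  rcases eq_or_lt_of_le hr.1 with h0 | h0
  · rw [← h0, hF0]
  · rcases eq_or_lt_of_le hr.2 with h1 | h1
    · subst h1
      have hcw : ContinuousWithinAt F (Ioo (0:ℝ) 1) 1 :=
        (hFc 1 (right_mem_Icc.mpr zero_le_one)).mono Ioo_subset_Icc_self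
      have hne : (nhdsWithin (1:ℝ) (Ioo (0:ℝ) 1)).NeBot := by
        rw [← mem_closure_iff_nhdsWithin_neBot, closure_Ioo (by norm_num : (0:ℝ) ≠ 1)]
        exact right_mem_Icc.mpr zero_le_one
      exact le_of_tendsto hcw (eventually_nhdsWithin_of_forall fun x hx => (main x hx).le)
    · exact (main r ⟨h0, h1⟩).le
end

section
/- Fix n ≥ 4 and s ∈ (n/2+1, n). Suppose F : [0,1) → ℝ is C¹, satisfies F' + (n-s)F² + ((2s-n-1)r/ρ₀ + n/r)F + (2s-n-1)/ρ₀ = 0 on (0,1) with ρ₀(r) = (1-r²)/2, F(0) = 0, and F ≤ 0 on [0,1). Then 0 < 1 + r·F(r) ≤ 1 for all r ∈ [0,1). -/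
open Real Set

theorem ode_one_plus_rF (n : ℕ) (hn : 4 ≤ n) (s : ℝ)
    (hs : s ∈ Set.Ioo ((n : ℝ) / 2 + 1) (n : ℝ))
    (F : ℝ → ℝ)
    (hF : ContDiffOn ℝ 1 F (Set.Ico (0 : ℝ) 1))
    (hODE : ∀ r ∈ Set.Ioo (0 : ℝ) 1,
      deriv F r + ((n : ℝ) - s) * (F r) ^ 2 +
        ((2 * s - (n : ℝ) - 1) * r / ((1 - r ^ 2) / 2) + (n : ℝ) / r) * F r +
        (2 * s - (n : ℝ) - 1) / ((1 - r ^ 2) / 2) = 0)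
    (hF0 : F 0 = 0)
    (hFneg : ∀ r ∈ Set.Ico (0 : ℝ) 1, F r ≤ 0) :
    ∀ r ∈ Set.Ico (0 : ℝ) 1, 0 < 1 + r * F r ∧ 1 + r * F r ≤ 1 := by
  obtain ⟨hs1, hs2⟩ := hs
  have hn4 : (4:ℝ) ≤ n := by exact_mod_cast hn
  have hsgt1 : (1:ℝ) < s := by linarith
  intro r hr
  obtain ⟨hr0, hr1⟩ := hr
  refine ⟨?_, by nlinarith [hFneg r ⟨hr0, hr1⟩]⟩
  by_contra hcon
  push_neg at hcon
  set G : ℝ → ℝ := fun x => 1 + x * F x with hGdef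
  have hGr : G r ≤ 0 := hcon
  have hG0 : G 0 = 1 := by simp [hGdef]
  have hFc : ContinuousOn F (Ico 0 1) := hF.continuousOn
  have hsub : Icc (0:ℝ) r ⊆ Ico 0 1 := fun x hx => ⟨hx.1, lt_of_le_of_lt hx.2 hr1⟩
  have hGc : ContinuousOn G (Icc 0 r) :=
    continuousOn_const.add (continuousOn_id.mul (hFc.mono hsub))
  -- the set of nonpositive points of G in [0, r]
  set S : Set ℝ := Icc (0:ℝ) r ∩ G ⁻¹' (Iic 0) with hSdef
  have hrS : r ∈ S := ⟨⟨hr0, le_refl r⟩, hGr⟩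
  have hSclosed : IsClosed S := hGc.preimage_isClosed_of_isClosed isClosed_Icc isClosed_Iic
  have hSbdd : BddBelow S := ⟨0, fun x hx => hx.1.1⟩
  set t : ℝ := sInf S with htdef
  have htS : t ∈ S := hSclosed.csInf_mem ⟨r, hrS⟩ hSbdd
  have ht0 : 0 ≤ t := htS.1.1
  have htr : t ≤ r := htS.1.2
  have htpos : 0 < t := by
    rcases lt_or_eq_of_le ht0 with h | h
    · exact h
    · exfalso; have := htS.2; rw [← h] at this; simp only [Set.mem_preimage, Set.mem_Iic, hG0] at this; linarith
  -- G is positive on [0, t)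
  have hGpos : ∀ x, 0 ≤ x → x < t → 0 < G x := by
    intro x hx0 hxt
    by_contra hle
    push_neg at hle
    have : x ∈ S := ⟨⟨hx0, le_trans (le_of_lt hxt) htr⟩, hle⟩
    exact absurd (csInf_le hSbdd this) (not_le.mpr hxt)
  -- IVT: there is z ∈ (0, t] with G z = 0
  have hGct : ContinuousOn G (Icc 0 t) := hGc.mono (Icc_subset_Icc le_rfl htr)
  have hmem : (0:ℝ) ∈ Icc (G t) (G 0) := ⟨htS.2, by rw [hG0]; norm_num⟩
  obtain ⟨z, hzI, hGz⟩ := intermediate_value_Icc' ht0 hGct hmem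
  have hz0 : 0 < z := by
    rcases lt_or_eq_of_le hzI.1 with h | h
    · exact h
    · exfalso; rw [← h, hG0] at hGz; norm_num at hGz
  have hz1 : z < 1 := lt_of_le_of_lt (le_trans hzI.2 htr) hr1
  have hzne : z ≠ 0 := ne_of_gt hz0
  have hz2 : (1:ℝ) - z ^ 2 ≠ 0 := by nlinarith
  -- F z = -1/z
  have hFz : F z = -1 / z := by
    have : z * F z = -1 := by
      have := hGz; simp only [hGdef] at this; linarith
    field_simp
    linarith
  -- F differentiable at z
  have hFd : DifferentiableAt ℝ F z :=
    ((hF.differentiableOn one_ne_zero).mono Ioo_subset_Ico_self).differentiableAt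
      (Ioo_mem_nhds hz0 hz1)
  -- derivative of F at z from the ODE
  have hode := hODE z ⟨hz0, hz1⟩
  have hderiv : deriv F z = s / z ^ 2 := by
    rw [hFz] at hode
    have h : deriv F z = -(((n:ℝ) - s) * (-1/z)^2 +
        ((2*s - (n:ℝ) - 1)*z/((1-z^2)/2) + (n:ℝ)/z) * (-1/z) + (2*s - (n:ℝ) - 1)/((1-z^2)/2)) := by
      linarith
    rw [h]; field_simp; ring
  -- G has derivative (s-1)/z at z
  have hG' : HasDerivAt G ((s - 1) / z) z := by
    have h1 : HasDerivAt (fun x => x * F x) (1 * F z + z * deriv F z) z :=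
      (hasDerivAt_id z).mul hFd.hasDerivAt
    have h2 : HasDerivAt G (1 * F z + z * deriv F z) z := h1.const_add 1
    convert h2 using 1
    rw [hFz, hderiv]
    field_simp
    ring
  have hcpos : 0 < (s - 1) / z := div_pos (by linarith) hz0
  -- slope of G at z is eventually positive near z
  have hslope : Filter.Tendsto (slope G z) (nhdsWithin z {z}ᶜ) (nhds ((s - 1) / z)) :=
    hasDerivAt_iff_tendsto_slope.mp hG'
  have hev : ∀ᶠ x in nhdsWithin z (Iio z), 0 < slope G z x := by
    have := hslope.eventually (eventually_gt_nhds hcpos)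
    exact this.filter_mono (nhdsWithin_mono z (fun x hx => ne_of_lt hx))
  have hev2 : ∀ᶠ x in nhdsWithin z (Iio z), x ∈ Ioo (0:ℝ) z :=
    Ioo_mem_nhdsLT_of_mem ⟨hz0, le_rfl⟩
  obtain ⟨x, hxs, hx0, hxz⟩ := (hev.and hev2).exists
  -- slope positive & x < z & G z = 0 force G x < 0, contradiction with hGpos
  have hslope_val : slope G z x = G x / (x - z) := by
    rw [slope_def_field, hGz]
    ring_nf
  have hxz' : x - z < 0 := by linarith
  have hGxneg : G x < 0 := by
    rw [hslope_val] at hxs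
    by_contra h
    push_neg at h
    have : G x / (x - z) ≤ 0 := div_nonpos_of_nonneg_of_nonpos h (le_of_lt hxz')
    linarith
  have : 0 < G x := hGpos x (le_of_lt hx0) (lt_of_lt_of_le hxz hzI.2)
  linarith
end
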